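/- If ν is the uniform distribution on (0,1), then G(t) = (t∧1) − (t∧1)^{α+1}/((α+1)t^α), H(t) = (t∧1)^{α+1}/(α+1), and the Kendall renewal function equals R(t) = t((α+1)² − α² t)/(α+1 − αt)² for t ≤ 1 and R(t) = 2(α+1)t^α − 1 for t > 1. -/

import Mathlib

open MeasureTheory Real Filter Set

/-- Kendall renewal function for the uniform unit step distribution on (0,1). -/
theorem kendall_renewal_uniform
    (α : ℝ) (hα : 0 < α)
    (ν : Measure ℝ) (hν : ν = volume.restrict (Set.Ioo (0 : ℝ) 1))
    (G H R : ℝ → ℝ)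
    (hG : ∀ t, G t = ∫ x, max (1 - x ^ α / t ^ α) 0 ∂ν)
    (hH : ∀ t, H t = ∫ x in Set.Ioc 0 t, x ^ α ∂ν)
    (hR : ∀ t, R t = G t / (1 - G t) + H t / (t ^ α * (1 - G t) ^ 2)) :
    ∀ t : ℝ, 0 < t →
      G t = min t 1 - (min t 1) ^ (α + 1) / ((α + 1) * t ^ α) ∧
      H t = (min t 1) ^ (α + 1) / (α + 1) ∧
      R t = if t ≤ 1 then t * ((α + 1) ^ 2 - α ^ 2 * t) / ((α + 1) - α * t) ^ 2
            else 2 * (α + 1) * t ^ α - 1 := by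
  intro t ht
  have hα1 : α + 1 ≠ 0 := by positivity
  have htα : (0:ℝ) < t ^ α := Real.rpow_pos_of_pos ht α
  have hcont : Continuous fun x : ℝ => x ^ α := Real.continuous_rpow_const hα.le
  have hcontf : Continuous fun x : ℝ => max (1 - x ^ α / t ^ α) 0 :=
    ((continuous_const.sub (hcont.div_const _)).max continuous_const)
  have hint : ∀ b : ℝ, 0 < b → ∫ x in Set.Ioo (0:ℝ) b, x ^ α = b ^ (α+1) / (α+1) := by
    intro b hb
    rw [← MeasureTheory.integral_Ioc_eq_integral_Ioo,
        ← intervalIntegral.integral_of_le hb.le,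
        integral_rpow (Or.inl (by linarith)),
        Real.zero_rpow (by positivity)]
    ring
  -- compute G
  have hGt : G t = min t 1 - (min t 1) ^ (α + 1) / ((α + 1) * t ^ α) := by
    rw [hG, hν]
    rcases le_or_gt t 1 with h1 | h1
    · rw [min_eq_left h1]
      rw [MeasureTheory.Measure.restrict_congr_set Ioo_ae_eq_Ioc,
          ← intervalIntegral.integral_of_le (by norm_num : (0:ℝ) ≤ 1),
          ← intervalIntegral.integral_add_adjacent_intervals
            (hcontf.intervalIntegrable 0 t) (hcontf.intervalIntegrable t 1)]
      have e2 : ∫ x in t..1, max (1 - x ^ α / t ^ α) 0 = 0 := by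
        rw [intervalIntegral.integral_congr (g := fun _ => 0)]
        · simp
        · intro x hx
          rw [Set.uIcc_of_le h1] at hx
          have hxα : t ^ α ≤ x ^ α := Real.rpow_le_rpow ht.le hx.1 hα.le
          simp only
          rw [max_eq_right]
          have : (1:ℝ) ≤ x ^ α / t ^ α := (one_le_div htα).2 hxα
          linarith
      have e1 : ∫ x in (0:ℝ)..t, max (1 - x ^ α / t ^ α) 0
          = ∫ x in (0:ℝ)..t, (1 - x ^ α / t ^ α) := by
        apply intervalIntegral.integral_congr
        intro x hx
        rw [Set.uIcc_of_le ht.le] at hx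
        have hxα : x ^ α ≤ t ^ α := Real.rpow_le_rpow hx.1 hx.2 hα.le
        simp only
        rw [max_eq_left]
        have : x ^ α / t ^ α ≤ 1 := (div_le_one htα).2 hxα
        linarith
      rw [e1, e2, add_zero,
          intervalIntegral.integral_sub (intervalIntegrable_const)
            ((hcont.div_const _).intervalIntegrable 0 t),
          intervalIntegral.integral_div, integral_rpow (Or.inl (by linarith)),
          Real.zero_rpow (by positivity), intervalIntegral.integral_const,
          Real.rpow_add_one ht.ne']
      field_simp
      simp only [smul_eq_mul]; ring
    · rw [min_eq_right h1.le, Real.one_rpow]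
      rw [MeasureTheory.Measure.restrict_congr_set Ioo_ae_eq_Ioc,
          ← intervalIntegral.integral_of_le (by norm_num : (0:ℝ) ≤ 1)]
      have e1 : ∫ x in (0:ℝ)..1, max (1 - x ^ α / t ^ α) 0
          = ∫ x in (0:ℝ)..1, (1 - x ^ α / t ^ α) := by
        apply intervalIntegral.integral_congr
        intro x hx
        rw [Set.uIcc_of_le (by norm_num : (0:ℝ) ≤ 1)] at hx
        have hxα : x ^ α ≤ t ^ α := Real.rpow_le_rpow hx.1 (hx.2.trans h1.le) hα.le
        simp only
        rw [max_eq_left]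
        have : x ^ α / t ^ α ≤ 1 := (div_le_one htα).2 hxα
        linarith
      rw [e1,
          intervalIntegral.integral_sub (intervalIntegrable_const)
            ((hcont.div_const _).intervalIntegrable 0 1),
          intervalIntegral.integral_div, integral_rpow (Or.inl (by linarith)),
          Real.zero_rpow (by positivity), Real.one_rpow,
          intervalIntegral.integral_const]
      field_simp
      simp only [smul_eq_mul]; ring
  -- compute H
  have hHt : H t = (min t 1) ^ (α + 1) / (α + 1) := by
    rw [hH, hν, MeasureTheory.Measure.restrict_restrict measurableSet_Ioc]
    rcases le_or_gt t 1 with h1 | h1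
    · rw [min_eq_left h1, ← hint t ht]
      apply MeasureTheory.setIntegral_congr_set
      rw [MeasureTheory.ae_eq_set]
      constructor
      · refine measure_mono_null ?_ (measure_singleton t)
        intro x hx
        rcases eq_or_lt_of_le hx.1.1.2 with h | h
        · exact h
        · exact absurd ⟨hx.1.1.1, h⟩ hx.2
      · refine measure_mono_null (fun x hx => ?_) (measure_empty (μ := volume))
        exact absurd ⟨⟨hx.1.1, hx.1.2.le⟩, hx.1.1, lt_of_lt_of_le hx.1.2 h1⟩ hx.2
    · rw [min_eq_right h1.le, ← hint 1 one_pos]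
      have hs : Set.Ioc 0 t ∩ Set.Ioo 0 1 = Set.Ioo (0:ℝ) 1 :=
        Set.inter_eq_right.mpr (fun x hx => ⟨hx.1, hx.2.le.trans h1.le⟩)
      rw [hs]
  refine ⟨hGt, hHt, ?_⟩
  rcases le_or_gt t 1 with h1 | h1
  · have hden : (0:ℝ) < α + 1 - α * t := by nlinarith
    have hG' : G t = α * t / (α + 1) := by
      rw [hGt, min_eq_left h1, Real.rpow_add_one ht.ne']
      field_simp
      ring
    have h1G : 1 - G t = (α + 1 - α * t) / (α + 1) := by
      rw [hG']; field_simp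
    rw [if_pos h1, hR t, h1G, hG', hHt, min_eq_left h1, Real.rpow_add_one ht.ne']
    rw [div_div_eq_mul_div,
        show α * t / (α + 1) * (α + 1) / (α + 1 - α * t) = α * t / (α + 1 - α * t) from by
          field_simp]
    rw [show t ^ α * t / (α + 1) / (t ^ α * ((α + 1 - α * t) / (α + 1)) ^ 2)
        = t * (α + 1) / (α + 1 - α * t) ^ 2 from by field_simp]
    rw [div_add_div _ _ (ne_of_gt hden) (by positivity)]
    rw [div_eq_div_iff (by positivity) (by positivity)]
    ring
  · have hG' : G t = 1 - 1 / ((α + 1) * t ^ α) := by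
      rw [hGt, min_eq_right h1.le, Real.one_rpow]
    have h1G : 1 - G t = 1 / ((α + 1) * t ^ α) := by rw [hG']; ring
    rw [if_neg (not_le.mpr h1), hR t, h1G, hG', hHt, min_eq_right h1.le, Real.one_rpow]
    field_simp
    ring
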